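/- arXiv:1612.05845 — 7 statements merged into one kernel-verified Lean document; each statement's English description precedes it below -/
import Mathlib

section
/- Let X take values in a finite set 𝒳 of cardinality m ≥ 1, Y discrete, and 1 ≤ α ≤ 2. Define I_α(X;Y) = Σ_{x,y} P_X(x)P_Y(y) |P_{XY}(x,y)/(P_X(x)P_Y(y)) − 1|^α. Then I_α(X;Y) ≤ ((m−1)/m)·((m−1)^{α−1} + 1), and in particular I_α(X;Y) < 1 + m^{α−1}. -/
open scoped ENNReal

open Finset MeasureTheory

/-- Chord inequality for convex `|t - p|^α`. -/
lemma chord_ineq {r p α : ℝ} (hr0 : 0 ≤ r) (hr1 : r ≤ 1) (hp0 : 0 ≤ p) (hp1 : p ≤ 1)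
    (hα : 1 ≤ α) : |r - p| ^ α ≤ r * (1 - p) ^ α + (1 - r) * p ^ α := by
  have hα0 : (0:ℝ) < α := by linarith
  have self_le : ∀ s : ℝ, 0 ≤ s → s ≤ 1 → s ^ α ≤ s := by
    intro s hs0 hs1
    rcases eq_or_lt_of_le hs0 with h0 | h0
    · rw [← h0, Real.zero_rpow (ne_of_gt hα0)]
    · calc s ^ α ≤ s ^ (1:ℝ) := Real.rpow_le_rpow_of_exponent_ge h0 hs1 hα
        _ = s := Real.rpow_one s
  rcases le_total p r with h | h
  · have habs : |r - p| = r - p := abs_of_nonneg (by linarith)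
    have h2 : |r - p| ^ α ≤ (r * (1 - p)) ^ α := by
      rw [habs]; exact Real.rpow_le_rpow (by linarith) (by nlinarith) hα0.le
    have h3 : (r * (1 - p)) ^ α = r ^ α * (1 - p) ^ α :=
      Real.mul_rpow hr0 (by linarith)
    have h5 : r ^ α * (1 - p) ^ α ≤ r * (1 - p) ^ α :=
      mul_le_mul_of_nonneg_right (self_le r hr0 hr1) (Real.rpow_nonneg (by linarith) α)
    have h6 : 0 ≤ (1 - r) * p ^ α := mul_nonneg (by linarith) (Real.rpow_nonneg hp0 α)
    nlinarith [h2, h3, h5, h6]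
  · have habs : |r - p| = p - r := by rw [abs_of_nonpos (by linarith : r - p ≤ 0)]; ring
    have h2 : |r - p| ^ α ≤ ((1 - r) * p) ^ α := by
      rw [habs]; exact Real.rpow_le_rpow (by linarith) (by nlinarith) hα0.le
    have h3 : ((1 - r) * p) ^ α = (1 - r) ^ α * p ^ α :=
      Real.mul_rpow (by linarith) hp0
    have h5 : (1 - r) ^ α * p ^ α ≤ (1 - r) * p ^ α :=
      mul_le_mul_of_nonneg_right (self_le (1 - r) (by linarith) (by linarith))
        (Real.rpow_nonneg hp0 α)
    have h6 : 0 ≤ r * (1 - p) ^ α := mul_nonneg hr0 (Real.rpow_nonneg (by linarith) α)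
    nlinarith [h2, h3, h5, h6]

/-- pointwise bound for one `(x, y)` term. -/
lemma pt_bound {p q a α : ℝ} (hp0 : 0 < p) (hp1 : p ≤ 1) (ha0 : 0 ≤ a) (haq : a ≤ q)
    (hα : 1 ≤ α) :
    p * q * |a / (p * q) - 1| ^ α ≤ a * (p ^ (1 - α) * (1 - p) ^ α) + (q - a) * p := by
  have hq0 : 0 ≤ q := ha0.trans haq
  rcases eq_or_lt_of_le hq0 with hq | hq
  · have ha' : a = 0 := le_antisymm (haq.trans hq.symm.le) ha0
    rw [← hq, ha']; simp
  · obtain ⟨r, hr0, hr1, rfl⟩ : ∃ r, 0 ≤ r ∧ r ≤ 1 ∧ a = r * q :=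
      ⟨a / q, div_nonneg ha0 hq.le, by rw [div_le_one hq]; exact haq, by field_simp⟩
    have key := chord_ineq hr0 hr1 hp0.le hp1 hα
    have habs : r * q / (p * q) - 1 = (r - p) / p := by
      field_simp
    rw [habs, abs_div, abs_of_pos hp0, Real.div_rpow (abs_nonneg _) hp0.le]
    have hpp : p ^ (1 - α) * p ^ α = p := by
      rw [← Real.rpow_add hp0]; norm_num
    have hpd : p ^ (1 - α) = p / p ^ α := by
      rw [Real.rpow_sub hp0, Real.rpow_one]
    have hppow : 0 < p ^ α := Real.rpow_pos_of_pos hp0 α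
    have hc : p ^ (1 - α) * |r - p| ^ α ≤ r * (p ^ (1 - α) * (1 - p) ^ α) + (1 - r) * p := by
      calc p ^ (1 - α) * |r - p| ^ α
          ≤ p ^ (1 - α) * (r * (1 - p) ^ α + (1 - r) * p ^ α) :=
            mul_le_mul_of_nonneg_left key (Real.rpow_nonneg hp0.le _)
        _ = r * (p ^ (1 - α) * (1 - p) ^ α) + (1 - r) * (p ^ (1 - α) * p ^ α) := by ring
        _ = r * (p ^ (1 - α) * (1 - p) ^ α) + (1 - r) * p := by rw [hpp]
    have hlhs : p * q * (|r - p| ^ α / p ^ α) = q * (p ^ (1 - α) * |r - p| ^ α) := by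
      rw [hpd]; field_simp
    rw [hlhs]
    calc q * (p ^ (1 - α) * |r - p| ^ α)
        ≤ q * (r * (p ^ (1 - α) * (1 - p) ^ α) + (1 - r) * p) :=
          mul_le_mul_of_nonneg_left hc hq.le
      _ = r * q * (p ^ (1 - α) * (1 - p) ^ α) + (q - r * q) * p := by ring


lemma amgm_aux {p a b α : ℝ} (hp0 : 0 < p) (hp1 : p < 1) (ha : 0 < a) (hb : 0 < b)
    (hα1 : 1 ≤ α) (hα2 : α ≤ 2) :
    p ^ (2 - α) * (1 - p) ^ α
      ≤ a ^ (2 - α) * b ^ (α - 1) * ((2 - α) * (p * (1 - p)) / a + (α - 1) * (1 - p) ^ 2 / b) := by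
  have h1p : (0:ℝ) < 1 - p := by linarith
  have key := Real.geom_mean_le_arith_mean2_weighted (by linarith : (0:ℝ) ≤ 2 - α)
    (by linarith : (0:ℝ) ≤ α - 1)
    (le_of_lt (by positivity : (0:ℝ) < p * (1 - p) / a))
    (le_of_lt (by positivity : (0:ℝ) < (1 - p) ^ 2 / b)) (by ring)
  have hK : (0:ℝ) < a ^ (2 - α) * b ^ (α - 1) := by positivity
  have hprod : (p * (1 - p) / a) ^ (2 - α) * ((1 - p) ^ 2 / b) ^ (α - 1)
      * (a ^ (2 - α) * b ^ (α - 1)) = p ^ (2 - α) * (1 - p) ^ α := by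
    rw [Real.div_rpow (by positivity) ha.le, Real.div_rpow (by positivity) hb.le,
      Real.mul_rpow hp0.le h1p.le, sq, Real.mul_rpow h1p.le h1p.le]
    have h2 : (1 - p) ^ (2 - α) * ((1 - p) ^ (α - 1) * (1 - p) ^ (α - 1)) = (1 - p) ^ α := by
      rw [← Real.rpow_add h1p, ← Real.rpow_add h1p,
        show α - 1 + (α - 1) = 2 * α - 2 by ring,
        show 2 - α + (2 * α - 2) = α by ring]
    have ha' : a ^ (2 - α) ≠ 0 := by positivity
    have hb' : b ^ (α - 1) ≠ 0 := by positivity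
    field_simp
    linear_combination h2
  calc p ^ (2 - α) * (1 - p) ^ α
      = (p * (1 - p) / a) ^ (2 - α) * ((1 - p) ^ 2 / b) ^ (α - 1)
        * (a ^ (2 - α) * b ^ (α - 1)) := hprod.symm
    _ ≤ ((2 - α) * (p * (1 - p) / a) + (α - 1) * ((1 - p) ^ 2 / b))
        * (a ^ (2 - α) * b ^ (α - 1)) := mul_le_mul_of_nonneg_right key hK.le
    _ = a ^ (2 - α) * b ^ (α - 1) * ((2 - α) * (p * (1 - p)) / a + (α - 1) * (1 - p) ^ 2 / b) := by
        ring



lemma simplex_bound {ι : Type*} [Fintype ι] (p : ι → ℝ) (hp0 : ∀ i, 0 < p i)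
    (hsum : ∑ i, p i = 1) (α : ℝ) (hα1 : 1 ≤ α) (hα2 : α ≤ 2)
    (m : ℕ) (hm : m = Fintype.card ι) (hm2 : 2 ≤ m) :
    ∑ i, (p i ^ (2 - α) * (1 - p i) ^ α + p i * (1 - p i))
      ≤ ((m : ℝ) - 1) / m * (((m : ℝ) - 1) ^ (α - 1) + 1) := by
  classical
  set M := (m : ℝ) with hMdef
  have hM2 : (2:ℝ) ≤ M := by rw [hMdef]; exact_mod_cast hm2
  have hM0 : (0:ℝ) < M := by linarith
  have hM1 : (0:ℝ) < M - 1 := by linarith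
  have hplt : ∀ i, p i < 1 := by
    intro i
    have h2card : 1 < Fintype.card ι := by omega
    obtain ⟨j, hj⟩ := Fintype.exists_ne_of_one_lt_card h2card i
    have hij : ∑ k ∈ ({i, j} : Finset ι), p k ≤ ∑ k, p k :=
      Finset.sum_le_sum_of_subset_of_nonneg (Finset.subset_univ _) fun k _ _ => (hp0 k).le
    rw [Finset.sum_pair (Ne.symm hj)] at hij
    have := hp0 j
    rw [hsum] at hij
    linarith
  have hple : ∀ i, 0 ≤ 1 - p i := fun i => by linarith [hplt i]
  set A := ∑ i, p i * (1 - p i) with hA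
  have hsq : (1:ℝ) ≤ M * ∑ i, p i ^ 2 := by
    have h := sq_sum_le_card_mul_sum_sq (s := (Finset.univ : Finset ι)) (f := p)
    rw [hsum] at h
    simpa [Finset.card_univ, ← hm, hMdef] using h
  have hA' : A = 1 - ∑ i, p i ^ 2 := by
    rw [hA, Finset.sum_congr rfl (fun i _ => by ring : ∀ i ∈ Finset.univ, p i * (1 - p i) = p i - p i ^ 2),
      Finset.sum_sub_distrib, hsum]
  have hAle : A ≤ (M - 1) / M := by
    rw [hA', le_div_iff₀ hM0]
    nlinarith
  have hA0 : 0 ≤ A := Finset.sum_nonneg fun i _ => mul_nonneg (hp0 i).le (hple i)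
  have hC : ∑ i, (1 - p i) ^ 2 = M - 1 - A := by
    have hcard : ∑ _i : ι, (1:ℝ) = M := by
      simp [Finset.card_univ, ← hm, hMdef]
    calc ∑ i, (1 - p i) ^ 2 = ∑ i, ((1:ℝ) - p i - p i * (1 - p i)) :=
          Finset.sum_congr rfl fun i _ => by ring
      _ = (∑ _i : ι, (1:ℝ)) - (∑ i, p i) - A := by
          rw [Finset.sum_sub_distrib, Finset.sum_sub_distrib]
      _ = M - 1 - A := by rw [hcard, hsum]
  set a := (M - 1) / M with ha
  set b := (M - 1) ^ 2 / M with hb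
  have ha0 : (0:ℝ) < a := div_pos hM1 hM0
  have hb0 : (0:ℝ) < b := div_pos (by positivity) hM0
  set T := (M - 1) ^ (α - 1) with hT
  have hT0 : (0:ℝ) < T := Real.rpow_pos_of_pos hM1 _
  have hTle : T ≤ M - 1 := by
    calc T ≤ (M - 1) ^ (1:ℝ) :=
          Real.rpow_le_rpow_of_exponent_le (by linarith) (by linarith)
      _ = M - 1 := Real.rpow_one _
  have hb' : b = a * (M - 1) := by rw [ha, hb]; field_simp
  have hK : a ^ (2 - α) * b ^ (α - 1) = a * T := by
    rw [hb', Real.mul_rpow ha0.le hM1.le, ← mul_assoc, ← Real.rpow_add ha0,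
      show 2 - α + (α - 1) = (1:ℝ) by ring, Real.rpow_one, hT]
  have hsum_le : ∑ i, (p i ^ (2 - α) * (1 - p i) ^ α + p i * (1 - p i))
      ≤ (a * T) * ((2 - α) * A / a + (α - 1) * (M - 1 - A) / b) + A := by
    rw [← hC, ← hK]
    set K := a ^ (2 - α) * b ^ (α - 1) with hKdef
    calc ∑ i, (p i ^ (2 - α) * (1 - p i) ^ α + p i * (1 - p i))
        ≤ ∑ i, (K * ((2 - α) * (p i * (1 - p i)) / a + (α - 1) * (1 - p i) ^ 2 / b)
            + p i * (1 - p i)) :=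
          Finset.sum_le_sum fun i _ =>
            add_le_add_left (amgm_aux (hp0 i) (hplt i) ha0 hb0 hα1 hα2) _
      _ = ∑ i, (((2 - α) * K / a) * (p i * (1 - p i)) + ((α - 1) * K / b) * ((1 - p i) ^ 2)
            + p i * (1 - p i)) := Finset.sum_congr rfl fun i _ => by ring
      _ = ((2 - α) * K / a) * A + ((α - 1) * K / b) * (∑ i, (1 - p i) ^ 2) + A := by
          rw [Finset.sum_add_distrib, Finset.sum_add_distrib, ← Finset.mul_sum, ← Finset.mul_sum]
      _ = K * ((2 - α) * A / a + (α - 1) * (∑ i, (1 - p i) ^ 2) / b) + A := by ring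
  have key : (a * T) * ((2 - α) * A / a + (α - 1) * (M - 1 - A) / b) + A ≤ a * (T + 1) := by
    have hrw : (a * T) * ((2 - α) * A / a + (α - 1) * (M - 1 - A) / b) + A
        = (T * (2 - α) - T * (α - 1) / (M - 1) + 1) * A + T * (α - 1) := by
      rw [hb']
      field_simp
      ring
    rw [hrw]
    set c := T * (2 - α) - T * (α - 1) / (M - 1) + 1 with hc
    rcases le_or_gt 0 c with hc0 | hc0
    · have h1 : c * A ≤ c * a := mul_le_mul_of_nonneg_left hAle hc0
      have h2 : c * a + T * (α - 1) = a * (T + 1) := by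
        rw [hc, ha]; field_simp; ring
      linarith
    · have h1 : c * A ≤ 0 := mul_nonpos_of_nonpos_of_nonneg hc0.le hA0
      have h2 : T * (α - 1) ≤ a * (T + 1) := by
        rw [ha, div_mul_eq_mul_div, le_div_iff₀ hM0]
        nlinarith [mul_nonneg (mul_nonneg hT0.le hM0.le) (by linarith : (0:ℝ) ≤ 2 - α)]
      linarith
  calc ∑ i, (p i ^ (2 - α) * (1 - p i) ^ α + p i * (1 - p i))
      ≤ (a * T) * ((2 - α) * A / a + (α - 1) * (M - 1 - A) / b) + A := hsum_le
    _ ≤ a * (T + 1) := key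
    _ = (M - 1) / M * ((M - 1) ^ (α - 1) + 1) := by rw [ha, hT]


/-- Bound on the α-dependence measure
`I_α(X;Y) = Σ_{x,y} P_X(x)P_Y(y) |P_{XY}(x,y)/(P_X(x)P_Y(y)) − 1|^α` for `1 ≤ α ≤ 2`:
`I_α(X;Y) ≤ ((m−1)/m)((m−1)^{α−1} + 1) < 1 + m^{α−1}` where `m = |𝒳|`. -/
theorem stmt7 {𝒳 𝒴 : Type*} [Fintype 𝒳] [Nonempty 𝒳] [Countable 𝒴] [MeasurableSpace 𝒳]
    [MeasurableSpace 𝒴] [MeasurableSingletonClass 𝒳] [MeasurableSingletonClass 𝒴]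
    {Ω : Type*} [MeasurableSpace Ω] (μ : MeasureTheory.Measure Ω)
    [MeasureTheory.IsProbabilityMeasure μ]
    (X : Ω → 𝒳) (Y : Ω → 𝒴) (hX : Measurable X) (hY : Measurable Y)
    (pXY : 𝒳 → 𝒴 → ℝ) (pX : 𝒳 → ℝ) (pY : 𝒴 → ℝ)
    (hpXY : ∀ x y, pXY x y = (μ {ω | X ω = x ∧ Y ω = y}).toReal)
    (hpX : ∀ x, pX x = (μ {ω | X ω = x}).toReal)
    (hpY : ∀ y, pY y = (μ {ω | Y ω = y}).toReal)
    (hpXpos : ∀ x, 0 < pX x)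
    (α : ℝ) (hα1 : 1 ≤ α) (hα2 : α ≤ 2) (m : ℕ) (hm : m = Fintype.card 𝒳) :
    (∑ x : 𝒳, ∑' y : 𝒴, pX x * pY y * |pXY x y / (pX x * pY y) - 1| ^ α
        ≤ ((m : ℝ) - 1) / m * (((m : ℝ) - 1) ^ (α - 1) + 1)) ∧
      ∑ x : 𝒳, ∑' y : 𝒴, pX x * pY y * |pXY x y / (pX x * pY y) - 1| ^ α
        < 1 + (m : ℝ) ^ (α - 1) := by
  classical
  have hm1 : 1 ≤ m := by rw [hm]; exact Fintype.card_pos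
  rcases eq_or_lt_of_le hm1 with hm1' | hm2
  · -- m = 1
    have hcard : Fintype.card 𝒳 = 1 := by omega
    obtain ⟨x0, hx0⟩ := Fintype.card_eq_one_iff.mp hcard
    have hpX1 : ∀ x, pX x = 1 := by
      intro x
      have hset : {ω | X ω = x} = Set.univ := by
        ext ω; simp only [Set.mem_setOf_eq, Set.mem_univ, iff_true]
        rw [hx0 (X ω), hx0 x]
      rw [hpX, hset, measure_univ, ENNReal.toReal_one]
    have hpXYq : ∀ x y, pXY x y = pY y := by
      intro x y
      have hset : {ω | X ω = x ∧ Y ω = y} = {ω | Y ω = y} := by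
        ext ω
        simp only [Set.mem_setOf_eq, and_iff_right_iff_imp]
        intro _; rw [hx0 (X ω), hx0 x]
      rw [hpXY, hpY, hset]
    have hterm : ∀ x y, pX x * pY y * |pXY x y / (pX x * pY y) - 1| ^ α = 0 := by
      intro x y
      rw [hpX1, hpXYq, one_mul]
      rcases eq_or_ne (pY y) 0 with h | h
      · rw [h, zero_mul]
      · rw [div_self h, sub_self, abs_zero,
          Real.zero_rpow (ne_of_gt (by linarith : (0:ℝ) < α)), mul_zero]
    have hzero : ∑ x : 𝒳, ∑' y : 𝒴, pX x * pY y * |pXY x y / (pX x * pY y) - 1| ^ α = 0 :=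
      Finset.sum_eq_zero fun x _ => by rw [tsum_congr (hterm x), tsum_zero]
    rw [hzero]
    constructor
    · rw [← hm1']; norm_num
    · rw [← hm1']; norm_num [Real.one_rpow]
  · -- 2 ≤ m
    have hpY0 : ∀ y, 0 ≤ pY y := fun y => (hpY y) ▸ ENNReal.toReal_nonneg
    have hpXY0 : ∀ x y, 0 ≤ pXY x y := fun x y => (hpXY x y) ▸ ENNReal.toReal_nonneg
    have hXYle : ∀ x y, pXY x y ≤ pY y := by
      intro x y
      rw [hpXY, hpY]
      exact ENNReal.toReal_mono (measure_ne_top μ _) (measure_mono fun ω hω => hω.2)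
    have hYm : ∀ y : 𝒴, MeasurableSet {ω | Y ω = y} := fun y => hY (measurableSet_singleton y)
    have hXm : ∀ x : 𝒳, MeasurableSet {ω | X ω = x} := fun x => hX (measurableSet_singleton x)
    have hXYm : ∀ (x : 𝒳) (y : 𝒴), MeasurableSet {ω | X ω = x ∧ Y ω = y} :=
      fun x y => (hXm x).inter (hYm y)
    have hq1 : HasSum pY 1 := by
      have hd : Pairwise (Function.onFun Disjoint fun y : 𝒴 => {ω | Y ω = y}) := by
        intro i j hij
        rw [Function.onFun, Set.disjoint_left]
        rintro ω (hi : Y ω = i) (hj : Y ω = j)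
        exact hij (hi.symm.trans hj)
      have hU : (⋃ y : 𝒴, {ω | Y ω = y}) = Set.univ := by
        ext ω; simp only [Set.mem_iUnion, Set.mem_setOf_eq, Set.mem_univ, iff_true]
        exact ⟨Y ω, rfl⟩
      have hμ : ∑' y : 𝒴, μ {ω | Y ω = y} = 1 := by
        rw [← MeasureTheory.measure_iUnion hd hYm, hU, measure_univ]
      have hS : Summable pY :=
        (ENNReal.summable_toReal (by rw [hμ]; exact ENNReal.one_ne_top)).congr
          fun y => (hpY y).symm
      refine hS.hasSum_iff.mpr ?_
      rw [tsum_congr hpY, ← ENNReal.tsum_toReal_eq fun y => measure_ne_top μ _, hμ,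
        ENNReal.toReal_one]
    have hax : ∀ x, HasSum (fun y => pXY x y) (pX x) := by
      intro x
      have hd : Pairwise (Function.onFun Disjoint fun y : 𝒴 => {ω | X ω = x ∧ Y ω = y}) := by
        intro i j hij
        rw [Function.onFun, Set.disjoint_left]
        rintro ω ⟨-, hi⟩ ⟨-, hj⟩
        exact hij (hi.symm.trans hj)
      have hU : (⋃ y : 𝒴, {ω | X ω = x ∧ Y ω = y}) = {ω | X ω = x} := by
        ext ω; simp only [Set.mem_iUnion, Set.mem_setOf_eq]
        exact ⟨fun ⟨y, h, _⟩ => h, fun h => ⟨Y ω, h, rfl⟩⟩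
      have hμx : ∑' y : 𝒴, μ {ω | X ω = x ∧ Y ω = y} = μ {ω | X ω = x} := by
        rw [← MeasureTheory.measure_iUnion hd (hXYm x), hU]
      have hS : Summable (fun y => pXY x y) :=
        (ENNReal.summable_toReal (by rw [hμx]; exact measure_ne_top μ _)).congr
          fun y => (hpXY x y).symm
      refine hS.hasSum_iff.mpr ?_
      rw [tsum_congr (hpXY x), ← ENNReal.tsum_toReal_eq fun y => measure_ne_top μ _, hμx,
        ← hpX]
    have hpXsum : ∑ x : 𝒳, pX x = 1 := by
      have h := MeasureTheory.sum_measure_preimage_singleton (μ := μ) (Finset.univ : Finset 𝒳)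
        (f := X) (fun x _ => hX (measurableSet_singleton x))
      calc ∑ x : 𝒳, pX x = ∑ x : 𝒳, (μ (X ⁻¹' {x})).toReal :=
            Finset.sum_congr rfl fun x _ => hpX x
        _ = (∑ x : 𝒳, μ (X ⁻¹' {x})).toReal :=
            (ENNReal.toReal_sum fun x _ => measure_ne_top μ _).symm
        _ = 1 := by rw [h]; simp
    have hpXle1 : ∀ x, pX x ≤ 1 := by
      intro x
      calc pX x ≤ ∑ x : 𝒳, pX x :=
            Finset.single_le_sum (fun i _ => (hpXpos i).le) (Finset.mem_univ x)
        _ = 1 := hpXsum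
    have hstepA : ∀ x, ∑' y : 𝒴, pX x * pY y * |pXY x y / (pX x * pY y) - 1| ^ α
        ≤ pX x ^ (2 - α) * (1 - pX x) ^ α + pX x * (1 - pX x) := by
      intro x
      set c₁ := pX x ^ (1 - α) * (1 - pX x) ^ α with hc₁
      have hpt : ∀ y, pX x * pY y * |pXY x y / (pX x * pY y) - 1| ^ α
          ≤ pXY x y * c₁ + (pY y - pXY x y) * pX x :=
        fun y => pt_bound (hpXpos x) (hpXle1 x) (hpXY0 x y) (hXYle x y) hα1
      have hR : HasSum (fun y => pXY x y * c₁ + (pY y - pXY x y) * pX x)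
          (pX x * c₁ + (1 - pX x) * pX x) :=
        ((hax x).mul_right c₁).add ((hq1.sub (hax x)).mul_right (pX x))
      have hL : Summable (fun y : 𝒴 => pX x * pY y * |pXY x y / (pX x * pY y) - 1| ^ α) :=
        Summable.of_nonneg_of_le
          (fun y => mul_nonneg (mul_nonneg (hpXpos x).le (hpY0 y))
            (Real.rpow_nonneg (abs_nonneg _) α)) hpt hR.summable
      have hpp : pX x * pX x ^ (1 - α) = pX x ^ (2 - α) := by
        nth_rewrite 1 [← Real.rpow_one (pX x)]
        rw [← Real.rpow_add (hpXpos x), show (1:ℝ) + (1 - α) = 2 - α by ring]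
      calc ∑' y : 𝒴, pX x * pY y * |pXY x y / (pX x * pY y) - 1| ^ α
          ≤ ∑' y : 𝒴, (pXY x y * c₁ + (pY y - pXY x y) * pX x) :=
            Summable.tsum_le_tsum hpt hL hR.summable
        _ = pX x * c₁ + (1 - pX x) * pX x := hR.tsum_eq
        _ = (pX x * pX x ^ (1 - α)) * (1 - pX x) ^ α + pX x * (1 - pX x) := by
            rw [hc₁]; ring
        _ = pX x ^ (2 - α) * (1 - pX x) ^ α + pX x * (1 - pX x) := by rw [hpp]
    have hfirst : ∑ x : 𝒳, ∑' y : 𝒴, pX x * pY y * |pXY x y / (pX x * pY y) - 1| ^ α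
        ≤ ((m : ℝ) - 1) / m * (((m : ℝ) - 1) ^ (α - 1) + 1) := by
      calc ∑ x : 𝒳, ∑' y : 𝒴, pX x * pY y * |pXY x y / (pX x * pY y) - 1| ^ α
          ≤ ∑ x : 𝒳, (pX x ^ (2 - α) * (1 - pX x) ^ α + pX x * (1 - pX x)) :=
            Finset.sum_le_sum fun x _ => hstepA x
        _ ≤ ((m : ℝ) - 1) / m * (((m : ℝ) - 1) ^ (α - 1) + 1) :=
            simplex_bound pX hpXpos hpXsum α hα1 hα2 m hm hm2
    refine ⟨hfirst, lt_of_le_of_lt hfirst ?_⟩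
    have hM2 : (2:ℝ) ≤ (m : ℝ) := by exact_mod_cast hm2
    have h1 : ((m:ℝ) - 1) / m < 1 := by
      rw [div_lt_one (by linarith : (0:ℝ) < (m:ℝ))]; linarith
    have hT1 : ((m:ℝ) - 1) ^ (α - 1) ≤ (m:ℝ) ^ (α - 1) :=
      Real.rpow_le_rpow (by linarith) (by linarith) (by linarith)
    have hTpos : (0:ℝ) < ((m:ℝ) - 1) ^ (α - 1) + 1 := by
      have := Real.rpow_nonneg (by linarith : (0:ℝ) ≤ (m:ℝ) - 1) (α - 1)
      linarith
    calc ((m:ℝ) - 1) / m * (((m:ℝ) - 1) ^ (α - 1) + 1)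
        < 1 * (((m:ℝ) - 1) ^ (α - 1) + 1) := mul_lt_mul_of_pos_right h1 hTpos
      _ = ((m:ℝ) - 1) ^ (α - 1) + 1 := one_mul _
      _ ≤ (m:ℝ) ^ (α - 1) + 1 := by linarith
      _ = 1 + (m:ℝ) ^ (α - 1) := by ring
end

section
/- For any m ≥ 2 and 1 ≤ α ≤ 2, the real function g(t) = t^{2−α}(1−t)^α − t² − [ (2(m−1)^α − 2)/m − α(m−1)^{α−1} ](t − 1/m) − ((m−1)^α − 1)/m² satisfies g(t) ≤ 0 for all t ∈ [0,1]. -/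
/-- For `m ≥ 2` and `1 ≤ α ≤ 2`, the function
`g(t) = t^{2−α}(1−t)^α − t² − [(2(m−1)^α − 2)/m − α(m−1)^{α−1}](t − 1/m) − ((m−1)^α − 1)/m²`
is nonpositive on `[0,1]` (real powers, with the convention `0^0 = 1`). -/
theorem stmt8 (m α : ℝ) (hm : 2 ≤ m) (hα1 : 1 ≤ α) (hα2 : α ≤ 2) :
    ∀ t ∈ Set.Icc (0 : ℝ) 1,
      t ^ (2 - α) * (1 - t) ^ α - t ^ 2
        - ((2 * (m - 1) ^ α - 2) / m - α * (m - 1) ^ (α - 1)) * (t - 1 / m)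
        - ((m - 1) ^ α - 1) / m ^ 2 ≤ 0 := by
  intro t ht
  obtain ⟨ht0, ht1⟩ := ht
  have hr1 : (1 : ℝ) ≤ m - 1 := by linarith
  have hr0 : (0 : ℝ) < m - 1 := by linarith
  set B : ℝ := (m - 1) ^ (α - 2) with hBdef
  have hB0 : (0 : ℝ) < B := Real.rpow_pos_of_pos hr0 _
  have hB1 : B ≤ 1 := Real.rpow_le_one_of_one_le_of_nonpos hr1 (by linarith)
  have hBm1 : (m - 1) ^ (α - 1) = B * (m - 1) := by
    rw [hBdef, show α - 1 = (α - 2) + 1 by ring, Real.rpow_add_one hr0.ne']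
  have hBa : (m - 1) ^ α = B * (m - 1) * (m - 1) := by
    rw [show (m - 1 : ℝ) ^ α = (m - 1) ^ ((α - 1) + 1) by norm_num,
      Real.rpow_add_one hr0.ne', hBm1]
  -- Step 1 : AM-GM tangent bound
  have key : t ^ (2 - α) * (1 - t) ^ α
      ≤ (α - 1) * B * (1 - t) ^ 2 + (2 - α) * (B * (m - 1)) * (t * (1 - t)) := by
    rcases eq_or_lt_of_le ht0 with h0 | h0
    · -- t = 0
      rcases eq_or_lt_of_le hα2 with h2 | h2
      · -- α = 2
        subst h2
        have hB : B = 1 := by rw [hBdef]; norm_num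
        rw [← h0]
        simp [Real.one_rpow, Real.rpow_zero, hB]
        norm_num
      · rw [← h0, Real.zero_rpow (by linarith : 2 - α ≠ 0)]
        simp
        nlinarith [hB0.le]
    · rcases eq_or_lt_of_le ht1 with h1 | h1
      · -- t = 1
        rw [h1]
        simp [Real.zero_rpow (by linarith : α ≠ 0)]
      · -- 0 < t < 1
        have h1t : (0 : ℝ) < 1 - t := by linarith
        have amgm := Real.geom_mean_le_arith_mean2_weighted
          (by linarith : (0:ℝ) ≤ α - 1) (by linarith : (0:ℝ) ≤ 2 - α)
          (div_nonneg h1t.le hr0.le) ht0 (by ring)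
        have e1 : ((1 - t) / (m - 1)) ^ (α - 1) = (1 - t) ^ (α - 1) / (B * (m - 1)) := by
          rw [Real.div_rpow h1t.le hr0.le, hBm1]
        rw [e1] at amgm
        have hpos : (0 : ℝ) < B * (m - 1) := by positivity
        have amgm' : (1 - t) ^ (α - 1) * t ^ (2 - α)
            ≤ ((α - 1) * ((1 - t) / (m - 1)) + (2 - α) * t) * (B * (m - 1)) := by
          rw [div_mul_eq_mul_div, div_le_iff₀ hpos] at amgm
          linarith [amgm]
        have e2 : (1 - t) ^ (α - 1) * (1 - t) = (1 - t) ^ α := by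
          rw [← Real.rpow_add_one h1t.ne', show α - 1 + 1 = α by ring]
        have step := mul_le_mul_of_nonneg_right amgm' h1t.le
        calc t ^ (2 - α) * (1 - t) ^ α
            = (1 - t) ^ (α - 1) * t ^ (2 - α) * (1 - t) := by rw [← e2]; ring
          _ ≤ ((α - 1) * ((1 - t) / (m - 1)) + (2 - α) * t) * (B * (m - 1)) * (1 - t) := step
          _ = (α - 1) * B * (1 - t) ^ 2 + (2 - α) * (B * (m - 1)) * (t * (1 - t)) := by
              field_simp
  -- Step 2 : quadratic identity and conclusion
  have hm0 : m ≠ 0 := by linarith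
  have hA : (α - 1) * B - (2 - α) * (B * (m - 1)) - 1 ≤ 0 := by
    nlinarith [hB0.le, mul_nonneg (mul_nonneg (by linarith : (0:ℝ) ≤ 2 - α) hB0.le) hr0.le]
  have hAsq : ((α - 1) * B - (2 - α) * (B * (m - 1)) - 1) * (t - 1 / m) ^ 2 ≤ 0 :=
    mul_nonpos_of_nonpos_of_nonneg hA (sq_nonneg _)
  have hid : (α - 1) * B * (1 - t) ^ 2 + (2 - α) * (B * (m - 1)) * (t * (1 - t)) - t ^ 2
      - ((2 * (B * (m - 1) * (m - 1)) - 2) / m - α * (B * (m - 1))) * (t - 1 / m)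
      - (B * (m - 1) * (m - 1) - 1) / m ^ 2
      = ((α - 1) * B - (2 - α) * (B * (m - 1)) - 1) * (t - 1 / m) ^ 2 := by
    field_simp
    ring
  rw [hBa, hBm1]
  linarith [key, hAsq, hid]
end

section
/- Let p be a probability vector (p₁,…,pₘ) with all pᵢ > 0 and let 1 ≤ α ≤ 2. Then 1 + Σ_{i=1}^m pᵢ²(|1/pᵢ − 1|^α − 1) ≤ ((m−1)/m)·((m−1)^{α−1} + 1), with equality when p is uniform. -/
open Finset

lemma stmt9_uniform (m : ℕ) (hm : 1 ≤ m) (p : Fin m → ℝ) (α : ℝ) (hα1 : 1 ≤ α)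
    (hpu : ∀ i, p i = 1 / m) :
    1 + ∑ i, (p i) ^ 2 * (|1 / p i - 1| ^ α - 1)
      = ((m : ℝ) - 1) / m * (((m : ℝ) - 1) ^ (α - 1) + 1) := by
  have hm0 : (0:ℝ) < m := by positivity
  have habs : |1 / ((1:ℝ)/m) - 1| = (m:ℝ) - 1 := by
    rw [one_div_one_div]
    have h1m : (1:ℝ) ≤ m := by exact_mod_cast hm
    exact abs_of_nonneg (by linarith)
  have hterm : ∀ i : Fin m, (p i) ^ 2 * (|1 / p i - 1| ^ α - 1)
      = (1/(m:ℝ))^2 * (((m:ℝ) - 1) ^ α - 1) := by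
    intro i
    rw [hpu i, habs]
  rw [Finset.sum_congr rfl (fun i _ => hterm i), Finset.sum_const, Finset.card_univ,
    Fintype.card_fin, nsmul_eq_mul]
  rcases eq_or_lt_of_le hm with h1 | h2
  · -- m = 1
    have : (m:ℝ) = 1 := by exact_mod_cast h1.symm
    rw [this]
    have : ((1:ℝ) - 1) ^ α = 0 := by
      rw [show (1:ℝ) - 1 = 0 by ring, Real.zero_rpow (by linarith : α ≠ 0)]
    rw [this]
    norm_num
  · -- m ≥ 2
    have hK0 : (0:ℝ) < (m:ℝ) - 1 := by
      have : (2:ℝ) ≤ m := by exact_mod_cast h2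
      linarith
    have hKα : ((m:ℝ) - 1) ^ α = ((m:ℝ) - 1) ^ (α - 1) * ((m:ℝ) - 1) := by
      rw [show α = (α - 1) + 1 by ring, Real.rpow_add_one hK0.ne']
      ring_nf
    rw [hKα]
    field_simp
    ring

/-- For a probability vector `p` with positive entries and `1 ≤ α ≤ 2`,
`1 + Σᵢ pᵢ²(|1/pᵢ − 1|^α − 1) ≤ ((m−1)/m)((m−1)^{α−1} + 1)`,
with equality when `p` is uniform. -/
theorem stmt9 (m : ℕ) (hm : 1 ≤ m) (p : Fin m → ℝ) (hp : ∀ i, 0 < p i)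
    (hsum : ∑ i, p i = 1) (α : ℝ) (hα1 : 1 ≤ α) (hα2 : α ≤ 2) :
    (1 + ∑ i, (p i) ^ 2 * (|1 / p i - 1| ^ α - 1)
        ≤ ((m : ℝ) - 1) / m * (((m : ℝ) - 1) ^ (α - 1) + 1)) ∧
      ((∀ i, p i = 1 / m) →
        1 + ∑ i, (p i) ^ 2 * (|1 / p i - 1| ^ α - 1)
          = ((m : ℝ) - 1) / m * (((m : ℝ) - 1) ^ (α - 1) + 1)) := by
  have hm0 : (0:ℝ) < m := by positivity
  constructor
  · rcases eq_or_lt_of_le hm with h1 | h2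
    · -- m = 1 : p is uniform
      subst h1
      have hpu : ∀ i : Fin 1, p i = 1 / ((1:ℕ):ℝ) := by
        intro i
        have : p 0 = 1 := by rw [← hsum, Fin.sum_univ_one]
        have hi : i = 0 := Subsingleton.elim i 0
        rw [hi, this]; norm_num
      exact le_of_eq (stmt9_uniform 1 le_rfl p α hα1 hpu)
    · -- m ≥ 2
      have hm2 : 2 ≤ m := h2
      have hmR : (2:ℝ) ≤ m := by exact_mod_cast hm2
      set β : ℝ := α - 1 with hβ
      have hβ0 : 0 ≤ β := by simp only [hβ]; linarith
      have hβ1 : β ≤ 1 := by simp only [hβ]; linarith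
      set K : ℝ := (m:ℝ) - 1 with hK
      have hK1 : (1:ℝ) ≤ K := by simp only [hK]; linarith
      have hK0 : (0:ℝ) < K := by linarith
      set A := K ^ β with hA
      set B := K ^ (β - 1) with hB
      have hA0 : 0 ≤ A := Real.rpow_nonneg hK0.le _
      have hB0 : 0 ≤ B := Real.rpow_nonneg hK0.le _
      have hB1 : B ≤ 1 := Real.rpow_le_one_of_one_le_of_nonpos hK1 (by linarith)
      have hBK : B * K = A := by
        rw [hA, hB, show β = (β - 1) + 1 by ring, Real.rpow_add_one hK0.ne']
        ring_nf
      -- every p i < 1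
      have hplt : ∀ i, p i < 1 := by
        intro i
        have hj : ∃ j : Fin m, j ≠ i := by
          by_cases h : (i:ℕ) = 0
          · exact ⟨⟨1, by omega⟩, Fin.ne_of_val_ne (by simp [h])⟩
          · exact ⟨⟨0, by omega⟩, Fin.ne_of_val_ne (by simp [h]; omega)⟩
        obtain ⟨j, hj⟩ := hj
        calc p i < ∑ k, p k :=
              Finset.single_lt_sum hj (Finset.mem_univ i) (Finset.mem_univ j)
                (hp j) (fun k _ _ => (hp k).le)
          _ = 1 := hsum
      -- per-term bound via weighted AM-GM (tangent at the uniform point)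
      have key : ∀ i : Fin m, (p i)^2 * (|1/p i - 1| ^ α - 1) ≤
          (1 - β) * A * (p i * (1 - p i)) + β * B * (1 - p i)^2 - (p i)^2 := by
        intro i
        have hp0 := hp i
        have hp1 := hplt i
        set u := (1 - p i) / p i with hu
        have hu0 : 0 < u := div_pos (by linarith) hp0
        have habs : |1 / p i - 1| = u := by
          rw [abs_of_nonneg, hu]
          · field_simp
          · have : (1:ℝ) ≤ 1 / p i := one_le_one_div hp0 hp1.le
            linarith
        rw [habs]
        have hαu : u ^ α = u ^ β * u := by
          rw [show α = β + 1 by rw [hβ]; ring, Real.rpow_add_one hu0.ne']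
        have hamgm : u ^ β ≤ (1 - β) * A + β * (B * u) := by
          have h2 := Real.geom_mean_le_arith_mean2_weighted
            (by linarith : (0:ℝ) ≤ 1 - β) hβ0 hA0 (mul_nonneg hB0 hu0.le) (by ring)
          refine le_trans (le_of_eq ?_) h2
          rw [hA, hB, Real.mul_rpow hB0 hu0.le, ← Real.rpow_mul hK0.le,
            ← Real.rpow_mul hK0.le, ← mul_assoc, ← Real.rpow_add hK0,
            show β * (1 - β) + (β - 1) * β = 0 by ring, Real.rpow_zero, one_mul]
        have hw0 : 0 ≤ p i * (1 - p i) := mul_nonneg hp0.le (by linarith)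
        have e1 : (p i)^2 * (u ^ α - 1) = (p i * (1 - p i)) * u ^ β - (p i)^2 := by
          rw [hαu, hu]
          field_simp
        have e2 : (p i * (1 - p i)) * u = (1 - p i)^2 := by
          rw [hu]; field_simp
        rw [e1]
        calc (p i * (1 - p i)) * u ^ β - (p i)^2
            ≤ (p i * (1 - p i)) * ((1 - β) * A + β * (B * u)) - (p i)^2 := by
              have := mul_le_mul_of_nonneg_left hamgm hw0
              linarith
          _ = (1 - β) * A * (p i * (1 - p i)) + β * B * ((p i * (1 - p i)) * u)
                - (p i)^2 := by ring
          _ = (1 - β) * A * (p i * (1 - p i)) + β * B * (1 - p i)^2 - (p i)^2 := by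
              rw [e2]
      set s := ∑ i, (p i)^2 with hs
      -- compute the sum of the bounds
      have hs1 : ∑ i, (p i * (1 - p i)) = 1 - s := by
        simp_rw [show ∀ i : Fin m, p i * (1 - p i) = p i - (p i)^2 from fun i => by ring]
        rw [Finset.sum_sub_distrib, hsum, ← hs]
      have hs2 : ∑ i, (1 - p i)^2 = (m:ℝ) - 2 + s := by
        simp_rw [show ∀ i : Fin m, (1 - p i)^2 = 1 - 2 * p i + (p i)^2 from fun i => by ring]
        rw [Finset.sum_add_distrib, Finset.sum_sub_distrib, ← Finset.mul_sum, hsum,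
          Finset.sum_const, Finset.card_univ, Fintype.card_fin, nsmul_eq_mul, ← hs]
        ring
      have hsum3 : ∑ i, ((1 - β) * A * (p i * (1 - p i)) + β * B * (1 - p i)^2 - (p i)^2)
          = (1 - β) * A * (1 - s) + β * B * ((m:ℝ) - 2 + s) - s := by
        rw [Finset.sum_sub_distrib, Finset.sum_add_distrib, ← Finset.mul_sum,
          ← Finset.mul_sum, hs1, hs2, ← hs]
      have hle : ∑ i, (p i)^2 * (|1/p i - 1| ^ α - 1)
          ≤ (1 - β) * A * (1 - s) + β * B * ((m:ℝ) - 2 + s) - s := by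
        rw [← hsum3]
        exact Finset.sum_le_sum (fun i _ => key i)
      -- Σ p² ≥ 1/m
      have hs_ge : 1 / (m:ℝ) ≤ s := by
        have h := sq_sum_le_card_mul_sum_sq (s := (Finset.univ : Finset (Fin m))) (f := p)
        rw [hsum, Finset.card_univ, Fintype.card_fin] at h
        rw [← hs] at h
        rw [div_le_iff₀ hm0]
        nlinarith
      have hd : 0 ≤ s - 1/(m:ℝ) := by linarith
      have hk : 0 ≤ 1 + (1-β)*A - β*B := by
        nlinarith [mul_nonneg (by linarith : (0:ℝ) ≤ 1 - β) hA0,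
          mul_le_mul_of_nonneg_left hB1 hβ0]
      have hid : K/(m:ℝ)*(A+1) - (1 + ((1 - β) * A * (1 - s) + β * B * ((m:ℝ) - 2 + s) - s))
          = (s - 1/(m:ℝ)) * (1 + (1-β)*A - β*B) := by
        rw [← hBK, hK]
        field_simp
        ring
      have hdk := mul_nonneg hd hk
      linarith
  · intro hpu
    exact stmt9_uniform m hm p α hα1 hpu
end

section
/- Let P, Q be probability measures with P ≪ Q, let α ≥ 1 and β its conjugate exponent (1/α + 1/β = 1), and let f be measurable with E_Q|f|^β < ∞ and f integrable under P and Q. Then E_P[f] − E_Q[f] − (1/β) E_Q|f|^β ≤ (1/α) ∫ |dP/dQ − 1|^α dQ. -/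
open MeasureTheory Real
open scoped ENNReal

/-- Variational lower bound on the `φ_α`-divergence: for `P ≪ Q`, conjugate exponents
`α, β` and `f` with `E_Q|f|^β < ∞`,
`E_P[f] − E_Q[f] − (1/β)E_Q|f|^β ≤ (1/α)∫|dP/dQ − 1|^α dQ`
(the right-hand side taken in `[0,∞]`). -/
theorem stmt10 {Ω : Type*} [MeasurableSpace Ω] (P Q : Measure Ω)
    [IsProbabilityMeasure P] [IsProbabilityMeasure Q] (hPQ : P ≪ Q)
    (α β : ℝ) (hα : 1 < α) (hconj : 1 / α + 1 / β = 1)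
    (f : Ω → ℝ) (hfmeas : Measurable f)
    (hfP : Integrable f P) (hfQ : Integrable f Q)
    (hfβ : Integrable (fun ω => |f ω| ^ β) Q) :
    ENNReal.ofReal (∫ ω, f ω ∂P - ∫ ω, f ω ∂Q - (1 / β) * ∫ ω, |f ω| ^ β ∂Q)
      ≤ ENNReal.ofReal (1 / α) *
        ∫⁻ ω, ENNReal.ofReal (|(P.rnDeriv Q ω).toReal - 1| ^ α) ∂Q := by
  set g : Ω → ℝ := fun ω => (P.rnDeriv Q ω).toReal with hgdef
  have hgmeas : Measurable g := (Measure.measurable_rnDeriv P Q).ennreal_toReal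
  have hconj' : Real.HolderConjugate α β :=
    Real.holderConjugate_iff.mpr ⟨hα, by rw [← one_div, ← one_div]; exact hconj⟩
  have hα0 : 0 < α := lt_trans one_pos hα
  -- pointwise Young
  have hpt : ∀ ω, f ω * (g ω - 1) ≤ |g ω - 1| ^ α / α + |f ω| ^ β / β := fun ω => by
    calc f ω * (g ω - 1) ≤ |f ω * (g ω - 1)| := le_abs_self _
      _ = |g ω - 1| * |f ω| := by rw [abs_mul, mul_comm]
      _ ≤ _ := Real.young_inequality_of_nonneg (abs_nonneg _) (abs_nonneg _) hconj'
  by_cases hfin : ∫⁻ ω, ENNReal.ofReal (|g ω - 1| ^ α) ∂Q = ⊤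
  · rw [hfin, ENNReal.mul_top (by simp [hα0, ENNReal.ofReal_eq_zero, not_le])]
    exact le_top
  -- the finite case
  have habsmeas : Measurable fun ω => |g ω - 1| ^ α :=
    (Real.continuous_rpow_const hα0.le).measurable.comp ((hgmeas.sub measurable_const).abs)
  have hgαint : Integrable (fun ω => |g ω - 1| ^ α) Q := by
    refine ⟨habsmeas.aestronglyMeasurable, ?_⟩
    rw [hasFiniteIntegral_iff_norm]
    simpa [Real.norm_eq_abs, abs_of_nonneg (Real.rpow_nonneg (abs_nonneg _) α)] using
      lt_top_iff_ne_top.2 hfin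
  have hgfint : Integrable (fun ω => g ω * f ω) Q := by
    simpa [smul_eq_mul] using (MeasureTheory.integrable_rnDeriv_smul_iff hPQ).mpr hfP
  have hEP : ∫ ω, f ω ∂P = ∫ ω, g ω * f ω ∂Q := by
    simpa [smul_eq_mul] using (MeasureTheory.integral_rnDeriv_smul hPQ (f := f)).symm
  have hint_diff : Integrable (fun ω => f ω * (g ω - 1)) Q := by
    have : (fun ω => f ω * (g ω - 1)) = fun ω => g ω * f ω - f ω := by
      funext ω; ring
    rw [this]; exact hgfint.sub hfQ
  have hintRHS : Integrable (fun ω => |g ω - 1| ^ α / α + |f ω| ^ β / β) Q :=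
    (hgαint.div_const α).add (hfβ.div_const β)
  have hmono : ∫ ω, f ω * (g ω - 1) ∂Q ≤
      ∫ ω, (|g ω - 1| ^ α / α + |f ω| ^ β / β) ∂Q :=
    integral_mono hint_diff hintRHS hpt
  have hsum : ∫ ω, (|g ω - 1| ^ α / α + |f ω| ^ β / β) ∂Q
      = (1 / α) * ∫ ω, |g ω - 1| ^ α ∂Q + (1 / β) * ∫ ω, |f ω| ^ β ∂Q := by
    rw [integral_add (hgαint.div_const α) (hfβ.div_const β), integral_div, integral_div]
    ring
  have hreal : ∫ ω, f ω ∂P - ∫ ω, f ω ∂Q - (1 / β) * ∫ ω, |f ω| ^ β ∂Q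
      ≤ (1 / α) * ∫ ω, |g ω - 1| ^ α ∂Q := by
    have hdiff : ∫ ω, f ω ∂P - ∫ ω, f ω ∂Q = ∫ ω, f ω * (g ω - 1) ∂Q := by
      rw [hEP, ← integral_sub hgfint hfQ]
      congr 1; funext ω; ring
    rw [hdiff]
    linarith [hmono, hsum ▸ hmono]
  have hlin : ENNReal.ofReal (∫ ω, |g ω - 1| ^ α ∂Q)
      = ∫⁻ ω, ENNReal.ofReal (|g ω - 1| ^ α) ∂Q :=
    ofReal_integral_eq_lintegral_ofReal hgαint
      (Filter.Eventually.of_forall fun ω => Real.rpow_nonneg (abs_nonneg _) α)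
  calc ENNReal.ofReal (∫ ω, f ω ∂P - ∫ ω, f ω ∂Q - (1 / β) * ∫ ω, |f ω| ^ β ∂Q)
      ≤ ENNReal.ofReal ((1 / α) * ∫ ω, |g ω - 1| ^ α ∂Q) := ENNReal.ofReal_le_ofReal hreal
    _ = ENNReal.ofReal (1 / α) * ENNReal.ofReal (∫ ω, |g ω - 1| ^ α ∂Q) :=
        ENNReal.ofReal_mul (by positivity)
    _ = _ := by rw [hlin]
end

section
/- Let P, Q be probability measures with P ≪ Q and let φ: ℝ_{≥0} → ℝ be convex with φ(1) = 0 and convex conjugate φ*. For any measurable f such that φ*(f) is Q-integrable and f is P-integrable, D_φ(P‖Q) ≥ E_P[f] − E_Q[φ*(f)]. -/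
open MeasureTheory Real
open scoped ENNReal

/-- Variational representation (lower bound) of the `φ`-divergence: for convex `φ` with
`φ(1) = 0` and `g` the convex conjugate of `φ` (restricted to `ℝ_{≥0}`) on the values
taken by `f`, `D_φ(P‖Q) = ∫ φ(dP/dQ) dQ ≥ E_P[f] − E_Q[g ∘ f]` whenever `g ∘ f` is
`Q`-integrable and `f` is `P`-integrable. -/
theorem stmt11 {Ω : Type*} [MeasurableSpace Ω] (P Q : Measure Ω)
    [IsProbabilityMeasure P] [IsProbabilityMeasure Q] (hPQ : P ≪ Q)
    (φ : ℝ → ℝ) (hφconv : ConvexOn ℝ (Set.Ici (0 : ℝ)) φ) (hφ1 : φ 1 = 0)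
    (f : Ω → ℝ) (hfmeas : Measurable f)
    (g : ℝ → ℝ)
    (hg : ∀ y ∈ Set.range f,
      IsLUB {z : ℝ | ∃ x ∈ Set.Ici (0 : ℝ), z = x * y - φ x} (g y))
    (hfP : Integrable f P)
    (hgf : Integrable (fun ω => g (f ω)) Q)
    (hφint : Integrable (fun ω => φ ((P.rnDeriv Q ω).toReal)) Q) :
    ∫ ω, f ω ∂P - ∫ ω, g (f ω) ∂Q ≤ ∫ ω, φ ((P.rnDeriv Q ω).toReal) ∂Q := by
  have hint : Integrable (fun ω => (P.rnDeriv Q ω).toReal • f ω) Q :=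
    (integrable_rnDeriv_smul_iff hPQ).mpr hfP
  have hEP : ∫ ω, f ω ∂P = ∫ ω, (P.rnDeriv Q ω).toReal • f ω ∂Q :=
    (integral_rnDeriv_smul (f:=f) hPQ).symm
  rw [hEP, ← integral_sub hint hgf]
  refine integral_mono (hint.sub hgf) hφint ?_
  intro ω
  have hub := (hg (f ω) ⟨ω, rfl⟩).1
  have : (P.rnDeriv Q ω).toReal * f ω - φ ((P.rnDeriv Q ω).toReal) ≤ g (f ω) :=
    hub ⟨(P.rnDeriv Q ω).toReal, ENNReal.toReal_nonneg, rfl⟩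
  simpa [smul_eq_mul, sub_le_iff_le_add] using by linarith
end

section
/- Let T be a random variable taking values in {1,…,n} and φ = (φ₁,…,φₙ) a random vector with E[φᵢ] = μᵢ and ‖φᵢ − μᵢ‖_β ≤ σᵢ, where 2 < β ≤ ∞ and 1/α + 1/β = 1. Assume T and φ are discrete. Then |E[φ_T − μ_T]| ≤ 2^{1/α} · (E_T[σ_T^β])^{1/β} · n^{1/β}. -/
open MeasureTheory Real Finset
open scoped ENNReal

/-- Exploration-bias bound for finite `β`-norms: if `‖φᵢ − μᵢ‖_β ≤ σᵢ` with `2 < β` and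
`1/α + 1/β = 1`, then `|E[φ_T − μ_T]| ≤ 2^{1/α} (E_T[σ_T^β])^{1/β} n^{1/β}`,
where `E_T[σ_T^β] = Σᵢ P(T = i) σᵢ^β`. -/
theorem stmt15 {Ω : Type*} [MeasurableSpace Ω] (μ : Measure Ω) [IsProbabilityMeasure μ]
    {n : ℕ} (hn : 0 < n) (T : Ω → Fin n) (hT : Measurable T)
    (φ : Fin n → Ω → ℝ) (hφmeas : ∀ i, Measurable (φ i))
    (m σ : Fin n → ℝ) (hσ : ∀ i, 0 ≤ σ i)
    (α β : ℝ) (hβ : 2 < β) (hconj : 1 / α + 1 / β = 1)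
    (hφint : ∀ i, Integrable (φ i) μ)
    (hm : ∀ i, m i = ∫ ω, φ i ω ∂μ)
    (hβint : ∀ i, Integrable (fun ω => |φ i ω - m i| ^ β) μ)
    (hnorm : ∀ i, (∫ ω, |φ i ω - m i| ^ β ∂μ) ^ (1 / β) ≤ σ i) :
    |∫ ω, (φ (T ω) ω - m (T ω)) ∂μ|
      ≤ 2 ^ (1 / α) * (∑ i, (μ {ω | T ω = i}).toReal * σ i ^ β) ^ (1 / β)
          * (n : ℝ) ^ (1 / β) := by
  set p : Fin n → ℝ := fun i => (μ {ω | T ω = i}).toReal with hp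
  have hβ0 : (0:ℝ) < β := by linarith
  have hβ1 : (1:ℝ) < β := by linarith
  have h1β : 1/β < 1/2 := by
    rw [div_lt_div_iff₀ hβ0 (by norm_num)]; linarith
  have h1βpos : 0 < 1/β := by positivity
  have h1α : 1/α = 1 - 1/β := by linarith
  have h1αpos : 0 < 1/α := by rw [h1α]; linarith
  have hαpos : 0 < α := by
    rcases lt_trichotomy α 0 with h | h | h
    · exfalso; have : 1/α < 0 := by exact div_neg_of_pos_of_neg one_pos h
      linarith
    · exfalso; rw [h] at h1αpos; simp at h1αpos
    · exact h
  have hcc : α * (1/α) = 1 := mul_one_div_cancel (ne_of_gt hαpos)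
  have hα2 : α < 2 := by nlinarith
  have hα1 : 1 < α := by nlinarith
  have hαβconj : Real.HolderConjugate β α := ⟨by
    rw [inv_eq_one_div, inv_eq_one_div, inv_one]; linarith, hβ0, hαpos⟩
  have hpnn : ∀ i, 0 ≤ p i := fun i => ENNReal.toReal_nonneg
  have hmeasA : ∀ i : Fin n, MeasurableSet {ω | T ω = i} := by
    intro i
    exact hT (measurableSet_singleton i)
  -- sum of probabilities is one
  have hsump : ∑ i, p i = 1 := by
    have h1 : ∑ i : Fin n, μ (T ⁻¹' {i}) = μ (T ⁻¹' ↑(Finset.univ : Finset (Fin n))) :=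
      sum_measure_preimage_singleton _ (fun y _ => hT (measurableSet_singleton y))
    have h2 : (T ⁻¹' ↑(Finset.univ : Finset (Fin n))) = Set.univ := by
      simp
    rw [h2] at h1
    have h3 : ∑ i : Fin n, μ (T ⁻¹' {i}) = 1 := by rw [h1, measure_univ]
    have h4 : ∑ i, p i = (∑ i : Fin n, μ (T ⁻¹' {i})).toReal := by
      rw [ENNReal.toReal_sum (fun i _ => measure_ne_top μ _)]
      rfl
    rw [h4, h3, ENNReal.toReal_one]
  -- pointwise decomposition
  have hdecomp : ∀ ω, φ (T ω) ω - m (T ω)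
      = ∑ i, Set.indicator {ω' | T ω' = i} (fun ω' => φ i ω' - m i) ω := by
    intro ω
    rw [Finset.sum_eq_single (T ω)]
    · have hmem : ω ∈ {ω' | T ω' = T ω} := by simp only [Set.mem_setOf_eq]
      exact (Set.indicator_of_mem hmem (fun ω' => φ (T ω) ω' - m (T ω))).symm
    · intro b _ hb
      refine Set.indicator_of_notMem ?_ (fun ω' => φ b ω' - m b)
      intro h
      exact hb (by simpa using h : T ω = b).symm
    · intro h; exact absurd (Finset.mem_univ _) h
  have hind : ∀ i : Fin n,
      Integrable (Set.indicator {ω' | T ω' = i} (fun ω' => φ i ω' - m i)) μ :=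
    fun i => ((hφint i).sub (integrable_const (m i))).indicator (hmeasA i)
  -- per-index bound
  have key : ∀ i : Fin n,
      |∫ ω, Set.indicator {ω' | T ω' = i} (fun ω' => φ i ω' - m i) ω ∂μ|
        ≤ σ i * p i ^ (1/α) := by
    intro i
    set A : Set Ω := {ω' | T ω' = i} with hA
    set g : Ω → ℝ := fun ω => φ i ω - m i with hg
    have hgmeas : Measurable g := (hφmeas i).sub measurable_const
    have h1 : |∫ ω, Set.indicator A g ω ∂μ| ≤ ∫ ω, |Set.indicator A g ω| ∂μ := by
      simpa [Real.norm_eq_abs] using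
        norm_integral_le_integral_norm (μ := μ) (Set.indicator A g)
    have h2 : ∀ ω, |Set.indicator A g ω| = |g ω| * Set.indicator A (fun _ => (1:ℝ)) ω := by
      intro ω
      by_cases hω : ω ∈ A
      · simp [Set.indicator_of_mem hω]
      · simp [Set.indicator_of_notMem hω]
    have hgLp : MemLp g (ENNReal.ofReal β) μ := by
      have hq0 : (ENNReal.ofReal β) ≠ 0 := by
        simp only [ne_eq, ENNReal.ofReal_eq_zero, not_le]; linarith
      have hiff := memLp_norm_rpow_iff (μ := μ) (p := ENNReal.ofReal β) (q := ENNReal.ofReal β)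
        hgmeas.aestronglyMeasurable hq0 ENNReal.ofReal_ne_top
      rw [ENNReal.div_self hq0 ENNReal.ofReal_ne_top, memLp_one_iff_integrable] at hiff
      apply hiff.mp
      have : (fun x => ‖g x‖ ^ (ENNReal.ofReal β).toReal) = fun ω => |φ i ω - m i| ^ β := by
        funext x
        rw [ENNReal.toReal_ofReal hβ0.le, Real.norm_eq_abs]
      rw [this]
      exact hβint i
    have hgabsLp : MemLp (fun ω => |g ω|) (ENNReal.ofReal β) μ := by
      have := hgLp.norm
      simpa [Real.norm_eq_abs] using this
    have hindLp : MemLp (Set.indicator A (fun _ => (1:ℝ))) (ENNReal.ofReal α) μ :=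
      MemLp.indicator (hmeasA i) (memLp_const 1)
    have holder := integral_mul_le_Lp_mul_Lq_of_nonneg hαβconj
      (ae_of_all μ (fun ω => abs_nonneg (g ω)))
      (ae_of_all μ (fun ω => Set.indicator_nonneg (fun _ _ => zero_le_one) ω))
      hgabsLp hindLp
    have hridx : ∀ ω, (Set.indicator A (fun _ => (1:ℝ)) ω) ^ α
        = Set.indicator A (fun _ => (1:ℝ)) ω := by
      intro ω
      by_cases hω : ω ∈ A
      · simp [Set.indicator_of_mem hω]
      · simp [Set.indicator_of_notMem hω, Real.zero_rpow (ne_of_gt hαpos)]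
    have hint1 : ∫ ω, (Set.indicator A (fun _ => (1:ℝ)) ω) ^ α ∂μ = p i := by
      simp_rw [hridx]
      have : (Set.indicator A (fun _ => (1:ℝ))) = A.indicator (1 : Ω → ℝ) := rfl
      rw [this, integral_indicator_one (hmeasA i)]; rfl
    have habs : ∀ ω, (|g ω|) ^ β = |φ i ω - m i| ^ β := fun ω => rfl
    calc |∫ ω, Set.indicator A g ω ∂μ|
        ≤ ∫ ω, |Set.indicator A g ω| ∂μ := h1
      _ = ∫ ω, |g ω| * Set.indicator A (fun _ => (1:ℝ)) ω ∂μ := by simp_rw [h2]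
      _ ≤ (∫ ω, |g ω| ^ β ∂μ) ^ (1/β) * (∫ ω, (Set.indicator A (fun _ => (1:ℝ)) ω) ^ α ∂μ) ^ (1/α) := holder
      _ = (∫ ω, |φ i ω - m i| ^ β ∂μ) ^ (1/β) * p i ^ (1/α) := by rw [hint1]
      _ ≤ σ i * p i ^ (1/α) :=
          mul_le_mul_of_nonneg_right (hnorm i) (Real.rpow_nonneg (hpnn i) _)
  -- sum bound
  set θ : ℝ := 1 - α/β with hθ
  have hθpos : 0 < θ := by
    rw [hθ, sub_pos, div_lt_one hβ0]; linarith
  have hθlt1 : θ < 1 := by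
    rw [hθ]; have : 0 < α/β := div_pos hαpos hβ0; linarith
  have step2 : ∑ i, σ i * p i ^ (1/α)
      ≤ (∑ i, p i * σ i ^ β) ^ (1/β) * (n:ℝ) ^ (1/β) := by
    have hsplit : ∀ i, σ i * p i ^ (1/α)
        = (σ i * p i ^ (1/β)) * (p i ^ (1/α - 1/β)) := by
      intro i
      rw [mul_assoc, ← Real.rpow_add' (hpnn i) (by simp; positivity)]
      ring_nf
    have holder := Real.inner_le_Lp_mul_Lq_of_nonneg (s := (univ : Finset (Fin n)))
      (f := fun i => σ i * p i ^ (1/β)) (g := fun i => p i ^ (1/α - 1/β)) hαβconj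
      (fun i _ => mul_nonneg (hσ i) (Real.rpow_nonneg (hpnn i) _))
      (fun i _ => Real.rpow_nonneg (hpnn i) _)
    have hfβ : ∀ i, (σ i * p i ^ (1/β)) ^ β = p i * σ i ^ β := by
      intro i
      rw [Real.mul_rpow (hσ i) (Real.rpow_nonneg (hpnn i) _),
        ← Real.rpow_mul (hpnn i), one_div_mul_cancel (ne_of_gt hβ0), Real.rpow_one]
      ring
    have hgα : ∀ i, (p i ^ (1/α - 1/β)) ^ α = p i ^ θ := by
      intro i
      rw [← Real.rpow_mul (hpnn i)]
      congr 1
      rw [hθ]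
      field_simp
      try ring
    simp_rw [hfβ, hgα] at holder
    have hpowsum : ∑ i, p i ^ θ ≤ (n:ℝ) ^ (1 - θ) := by
      have hw : ∀ i ∈ (univ : Finset (Fin n)), (0:ℝ) ≤ 1/(n:ℝ) := by
        intro i _; positivity
      have hw' : ∑ _i : Fin n, (1/(n:ℝ)) = 1 := by
        rw [Finset.sum_const, card_univ, Fintype.card_fin, nsmul_eq_mul]
        field_simp
      have hz : ∀ i ∈ (univ : Finset (Fin n)), (0:ℝ) ≤ p i ^ θ := by
        intro i _; exact Real.rpow_nonneg (hpnn i) _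
      have hp1 : (1:ℝ) ≤ 1/θ := by
        rw [le_div_iff₀ hθpos]; linarith
      have hmean := Real.arith_mean_le_rpow_mean (univ : Finset (Fin n))
        (fun _ => 1/(n:ℝ)) (fun i => p i ^ θ) hw hw' hz hp1
      have hzz : ∀ i, (p i ^ θ) ^ (1/θ) = p i := by
        intro i
        rw [← Real.rpow_mul (hpnn i), mul_one_div, div_self (ne_of_gt hθpos),
          Real.rpow_one]
      simp_rw [hzz] at hmean
      rw [one_div_one_div] at hmean
      rw [← Finset.mul_sum, ← Finset.mul_sum, hsump, mul_one, one_div] at hmean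
      -- hmean : (n:ℝ)⁻¹ * ∑ i, p i ^ θ ≤ ((n:ℝ)⁻¹) ^ θ
      have hn0 : (0:ℝ) < (n:ℝ) := by exact_mod_cast hn
      have : ∑ i, p i ^ θ ≤ (n:ℝ) * ((n:ℝ)⁻¹) ^ θ := by
        calc ∑ i, p i ^ θ = (n:ℝ) * ((n:ℝ)⁻¹ * ∑ i, p i ^ θ) := by
              field_simp
          _ ≤ (n:ℝ) * ((n:ℝ)⁻¹) ^ θ := by
              apply mul_le_mul_of_nonneg_left hmean hn0.le
      refine this.trans_eq ?_
      rw [Real.inv_rpow hn0.le, ← Real.rpow_neg hn0.le, sub_eq_add_neg,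
        Real.rpow_add hn0, Real.rpow_one]
    have hn0 : (0:ℝ) < (n:ℝ) := by exact_mod_cast hn
    have hsnn : (0:ℝ) ≤ ∑ i, p i * σ i ^ β :=
      Finset.sum_nonneg (fun i _ => mul_nonneg (hpnn i) (Real.rpow_nonneg (hσ i) _))
    have h2 : (∑ i, p i ^ θ) ^ (1/α) ≤ (n:ℝ) ^ (1/β) := by
      have hmono := Real.rpow_le_rpow
        (Finset.sum_nonneg (fun i (_ : i ∈ univ) => Real.rpow_nonneg (hpnn i) θ))
        hpowsum h1αpos.le
      refine hmono.trans_eq ?_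
      rw [← Real.rpow_mul hn0.le]
      congr 1
      rw [hθ]
      field_simp
      try ring
    calc ∑ i, σ i * p i ^ (1/α)
        = ∑ i, (σ i * p i ^ (1/β)) * (p i ^ (1/α - 1/β)) :=
          Finset.sum_congr rfl (fun i _ => hsplit i)
      _ ≤ (∑ i, p i * σ i ^ β) ^ (1/β) * (∑ i, p i ^ θ) ^ (1/α) := holder
      _ ≤ (∑ i, p i * σ i ^ β) ^ (1/β) * (n:ℝ) ^ (1/β) :=
          mul_le_mul_of_nonneg_left h2 (Real.rpow_nonneg hsnn _)
  -- combine
  have hsnn : (0:ℝ) ≤ ∑ i, p i * σ i ^ β :=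
    Finset.sum_nonneg (fun i _ => mul_nonneg (hpnn i) (Real.rpow_nonneg (hσ i) _))
  have hinteq : ∫ ω, (φ (T ω) ω - m (T ω)) ∂μ
      = ∑ i, ∫ ω, Set.indicator {ω' | T ω' = i} (fun ω' => φ i ω' - m i) ω ∂μ := by
    rw [← integral_finset_sum univ (fun i _ => hind i)]
    exact integral_congr_ae (ae_of_all μ hdecomp)
  calc |∫ ω, (φ (T ω) ω - m (T ω)) ∂μ|
      = |∑ i, ∫ ω, Set.indicator {ω' | T ω' = i} (fun ω' => φ i ω' - m i) ω ∂μ| := by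
        rw [hinteq]
    _ ≤ ∑ i, |∫ ω, Set.indicator {ω' | T ω' = i} (fun ω' => φ i ω' - m i) ω ∂μ| :=
        Finset.abs_sum_le_sum_abs _ _
    _ ≤ ∑ i, σ i * p i ^ (1/α) := Finset.sum_le_sum (fun i _ => key i)
    _ ≤ (∑ i, p i * σ i ^ β) ^ (1/β) * (n:ℝ) ^ (1/β) := step2
    _ ≤ 2 ^ (1/α) * (∑ i, p i * σ i ^ β) ^ (1/β) * (n:ℝ) ^ (1/β) := by
        rw [mul_assoc]
        have h2one : (1:ℝ) ≤ 2 ^ (1/α) := by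
          calc (1:ℝ) = 2 ^ (0:ℝ) := (Real.rpow_zero 2).symm
            _ ≤ 2 ^ (1/α) := Real.rpow_le_rpow_of_exponent_le one_le_two h1αpos.le
        exact le_mul_of_one_le_left
          (mul_nonneg (Real.rpow_nonneg hsnn _) (Real.rpow_nonneg (Nat.cast_nonneg n) _)) h2one
end

section
/- Let T be a random variable taking values in {1,…,n} and φ = (φ₁,…,φₙ) a discrete random vector with E[φᵢ] = μᵢ and E[(φᵢ−μᵢ)²] ≤ σᵢ² for each i. Then |E[φ_T − μ_T]| ≤ (E_T[σ_T²])^{1/2} · √(n−1). -/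
open MeasureTheory Real Finset
open scoped ENNReal

/-- Cauchy–Schwarz for integrals of real functions in L². -/
lemma cs_integral {Ω : Type*} [MeasurableSpace Ω] (μ : Measure Ω)
    {f g : Ω → ℝ} (hf : MemLp f 2 μ) (hg : MemLp g 2 μ) :
    |∫ ω, f ω * g ω ∂μ| ≤ Real.sqrt (∫ ω, f ω ^ 2 ∂μ) * Real.sqrt (∫ ω, g ω ^ 2 ∂μ) := by
  have h2 : (ENNReal.ofReal (2 : ℝ)) = 2 := by norm_num
  have hpq : Real.HolderConjugate 2 2 := Real.holderConjugate_iff.mpr ⟨one_lt_two, by norm_num⟩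
  have hf2 : MemLp f (ENNReal.ofReal (2 : ℝ)) μ := by rwa [h2]
  have hg2 : MemLp g (ENNReal.ofReal (2 : ℝ)) μ := by rwa [h2]
  have hint : Integrable (fun ω => f ω * g ω) μ := by
    have h1 : MemLp (f • g) 1 μ := MemLp.smul (r := 1) hg hf
    have := memLp_one_iff_integrable.mp h1
    exact this
  have h1 : |∫ ω, f ω * g ω ∂μ| ≤ ∫ ω, ‖f ω‖ * ‖g ω‖ ∂μ := by
    have := norm_integral_le_integral_norm (μ := μ) (f := fun ω => f ω * g ω)
    simpa [Real.norm_eq_abs, abs_mul] using this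
  have habs : ∀ x : ℝ, ‖x‖ ^ (2 : ℝ) = x ^ 2 := fun x => by
    rw [Real.rpow_two, Real.norm_eq_abs, sq_abs]
  have h3 := integral_mul_norm_le_Lp_mul_Lq hpq hf2 hg2
  simp only [habs] at h3
  refine h1.trans (h3.trans (le_of_eq ?_))
  rw [Real.sqrt_eq_rpow, Real.sqrt_eq_rpow]

/-- Exploration-bias bound via the χ²-type bound and the cardinality bound
`I₂(T;φ) ≤ n − 1`: if `E[(φᵢ − μᵢ)²] ≤ σᵢ²` then
`|E[φ_T − μ_T]| ≤ (E_T[σ_T²])^{1/2} √(n−1)`. -/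
theorem stmt16 {Ω : Type*} [MeasurableSpace Ω] (μ : Measure Ω) [IsProbabilityMeasure μ]
    {n : ℕ} (hn : 0 < n) (T : Ω → Fin n) (hT : Measurable T)
    (φ : Fin n → Ω → ℝ) (hφmeas : ∀ i, Measurable (φ i))
    (m σ : Fin n → ℝ) (hσ : ∀ i, 0 ≤ σ i)
    (hφint : ∀ i, Integrable (φ i) μ)
    (hm : ∀ i, m i = ∫ ω, φ i ω ∂μ)
    (h2int : ∀ i, Integrable (fun ω => (φ i ω - m i) ^ 2) μ)
    (hvar : ∀ i, ∫ ω, (φ i ω - m i) ^ 2 ∂μ ≤ σ i ^ 2) :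
    |∫ ω, (φ (T ω) ω - m (T ω)) ∂μ|
      ≤ (∑ i, (μ {ω | T ω = i}).toReal * σ i ^ 2) ^ (1 / 2 : ℝ)
          * Real.sqrt ((n : ℝ) - 1) := by
  classical
  set A : Fin n → Set Ω := fun i => {ω | T ω = i} with hA
  have hAm : ∀ i, MeasurableSet (A i) := fun i => hT (measurableSet_singleton i)
  set p : Fin n → ℝ := fun i => (μ (A i)).toReal with hp
  set g : Fin n → Ω → ℝ := fun i ω => φ i ω - m i with hgdef
  set f : Fin n → Ω → ℝ := fun i ω => (A i).indicator (fun _ => (1:ℝ)) ω - p i with hfdef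
  have hgint : ∀ i, Integrable (g i) μ := fun i => (hφint i).sub (integrable_const _)
  have hgzero : ∀ i, ∫ ω, g i ω ∂μ = 0 := by
    intro i
    show ∫ ω, (φ i ω - m i) ∂μ = 0
    rw [integral_sub (hφint i) (integrable_const _), integral_const, probReal_univ]
    simp [hm i]
  have hp0 : ∀ i, 0 ≤ p i := fun i => ENNReal.toReal_nonneg
  have hp1 : ∀ i, p i ≤ 1 := by
    intro i
    have h := (ENNReal.toReal_le_toReal (measure_ne_top μ _) ENNReal.one_ne_top).mpr
      (prob_le_one (μ := μ) (s := A i))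
    simpa using h
  have hfmeas : ∀ i, AEStronglyMeasurable (f i) μ := fun i =>
    ((measurable_const.indicator (hAm i)).sub measurable_const).aestronglyMeasurable
  have hfL2 : ∀ i, MemLp (f i) 2 μ := by
    intro i
    refine MemLp.mono_exponent (q := ⊤) ?_ le_top
    refine memLp_top_of_bound (hfmeas i) 2 (Filter.Eventually.of_forall fun ω => ?_)
    rw [Real.norm_eq_abs]
    refine (abs_sub _ _).trans ?_
    have h1 : |(A i).indicator (fun _ => (1:ℝ)) ω| ≤ 1 := by
      by_cases hω : ω ∈ A i <;> simp [Set.indicator_of_mem, Set.indicator_of_notMem, hω]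
    have h2 : |p i| ≤ 1 := by rw [abs_of_nonneg (hp0 i)]; exact hp1 i
    linarith
  have hgL2 : ∀ i, MemLp (g i) 2 μ := fun i =>
    (memLp_two_iff_integrable_sq
      ((hφmeas i).sub measurable_const).aestronglyMeasurable).mpr (h2int i)
  have hfsq : ∀ i, ∫ ω, f i ω ^ 2 ∂μ = p i * (1 - p i) := by
    intro i
    have hpt : ∀ ω, f i ω ^ 2
        = (A i).indicator (fun _ => (1:ℝ)) ω * (1 - 2 * p i) + p i ^ 2 := by
      intro ω
      by_cases hω : ω ∈ A i <;>
        simp [hfdef, Set.indicator_of_mem, Set.indicator_of_notMem, hω] <;> ring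
    rw [integral_congr_ae (Filter.Eventually.of_forall hpt)]
    rw [integral_add (((integrable_const (1:ℝ)).indicator (hAm i)).mul_const _)
      (integrable_const _), integral_mul_const, integral_indicator_const _ (hAm i),
      integral_const, probReal_univ]
    simp only [smul_eq_mul, ENNReal.toReal_one, mul_one, one_smul]
    rw [show μ.real (A i) = p i from rfl]
    ring
  -- decompose the integral
  have hdecomp : ∫ ω, (φ (T ω) ω - m (T ω)) ∂μ
      = ∑ i, ∫ ω, (A i).indicator (g i) ω ∂μ := by
    rw [← integral_finset_sum _ (fun i _ => (hgint i).indicator (hAm i))]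
    refine integral_congr_ae (Filter.Eventually.of_forall fun ω => ?_)
    show φ (T ω) ω - m (T ω) = ∑ i, (A i).indicator (g i) ω
    rw [Finset.sum_eq_single (T ω)]
    · rw [Set.indicator_of_mem (by exact rfl)]
    · intro b _ hb
      refine Set.indicator_of_notMem ?_ _
      intro h
      exact hb (show T ω = b from h).symm
    · intro h; exact absurd (Finset.mem_univ _) h
  have hkey : ∀ i, ∫ ω, (A i).indicator (g i) ω ∂μ = ∫ ω, f i ω * g i ω ∂μ := by
    intro i
    have hpt : ∀ ω, f i ω * g i ω = (A i).indicator (g i) ω - p i * g i ω := by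
      intro ω
      by_cases hω : ω ∈ A i <;>
        simp [hfdef, Set.indicator_of_mem, Set.indicator_of_notMem, hω] <;> ring
    rw [integral_congr_ae (Filter.Eventually.of_forall hpt),
      integral_sub ((hgint i).indicator (hAm i)) ((hgint i).const_mul _),
      integral_const_mul, hgzero i, mul_zero, sub_zero]
  have hbound : ∀ i, |∫ ω, (A i).indicator (g i) ω ∂μ|
      ≤ Real.sqrt (p i * σ i ^ 2) * Real.sqrt (1 - p i) := by
    intro i
    rw [hkey i]
    refine (cs_integral μ (hfL2 i) (hgL2 i)).trans ?_
    have h1 : Real.sqrt (∫ ω, g i ω ^ 2 ∂μ) ≤ σ i := by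
      refine (Real.sqrt_le_sqrt (hvar i)).trans ?_
      rw [Real.sqrt_sq (hσ i)]
    have h2 : Real.sqrt (∫ ω, f i ω ^ 2 ∂μ) = Real.sqrt (p i) * Real.sqrt (1 - p i) := by
      rw [hfsq i, Real.sqrt_mul (hp0 i)]
    calc Real.sqrt (∫ ω, f i ω ^ 2 ∂μ) * Real.sqrt (∫ ω, g i ω ^ 2 ∂μ)
        ≤ (Real.sqrt (p i) * Real.sqrt (1 - p i)) * σ i := by
          rw [h2]
          exact mul_le_mul_of_nonneg_left h1
            (mul_nonneg (Real.sqrt_nonneg _) (Real.sqrt_nonneg _))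
      _ = Real.sqrt (p i * σ i ^ 2) * Real.sqrt (1 - p i) := by
          rw [Real.sqrt_mul (hp0 i), Real.sqrt_sq (hσ i)]; ring
  have hsump : ∑ i, p i = 1 := by
    have hmeq : ∑ i, μ (A i) = 1 := by
      have h := sum_measure_preimage_singleton (μ := μ) (Finset.univ : Finset (Fin n))
        (fun i _ => hT (measurableSet_singleton i))
      have hAe : ∀ i, A i = T ⁻¹' {i} := fun i => rfl
      simp only [hAe]
      rw [h]
      simp
    have := congrArg ENNReal.toReal hmeq
    rwa [ENNReal.toReal_sum (fun i _ => measure_ne_top μ _), ENNReal.toReal_one] at this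
  have hsum1p : ∑ i, (1 - p i) = (n : ℝ) - 1 := by
    rw [Finset.sum_sub_distrib, hsump, Finset.sum_const, Finset.card_univ, Fintype.card_fin]
    simp
  have h1p : ∀ i, 0 ≤ 1 - p i := fun i => by linarith [hp1 i]
  -- Cauchy–Schwarz on the finite sum
  have hCS : ∑ i, Real.sqrt (p i * σ i ^ 2) * Real.sqrt (1 - p i)
      ≤ Real.sqrt (∑ i, p i * σ i ^ 2) * Real.sqrt ((n : ℝ) - 1) := by
    have hsq := Finset.sum_mul_sq_le_sq_mul_sq Finset.univ
      (fun i => Real.sqrt (p i * σ i ^ 2)) (fun i => Real.sqrt (1 - p i))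
    have hff : ∀ i, Real.sqrt (p i * σ i ^ 2) ^ 2 = p i * σ i ^ 2 := fun i =>
      Real.sq_sqrt (mul_nonneg (hp0 i) (sq_nonneg _))
    have hgg : ∀ i, Real.sqrt (1 - p i) ^ 2 = 1 - p i := fun i => Real.sq_sqrt (h1p i)
    simp only [hff, hgg] at hsq
    have hnn : 0 ≤ ∑ i, Real.sqrt (p i * σ i ^ 2) * Real.sqrt (1 - p i) :=
      Finset.sum_nonneg fun i _ => mul_nonneg (Real.sqrt_nonneg _) (Real.sqrt_nonneg _)
    calc ∑ i, Real.sqrt (p i * σ i ^ 2) * Real.sqrt (1 - p i)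
        = Real.sqrt ((∑ i, Real.sqrt (p i * σ i ^ 2) * Real.sqrt (1 - p i)) ^ 2) :=
          (Real.sqrt_sq hnn).symm
      _ ≤ Real.sqrt ((∑ i, p i * σ i ^ 2) * ∑ i, (1 - p i)) := Real.sqrt_le_sqrt hsq
      _ = Real.sqrt (∑ i, p i * σ i ^ 2) * Real.sqrt ((n : ℝ) - 1) := by
          rw [hsum1p, Real.sqrt_mul (Finset.sum_nonneg fun i _ =>
            mul_nonneg (hp0 i) (sq_nonneg _))]
  have hfinal : |∫ ω, (φ (T ω) ω - m (T ω)) ∂μ|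
      ≤ Real.sqrt (∑ i, p i * σ i ^ 2) * Real.sqrt ((n : ℝ) - 1) := by
    rw [hdecomp]
    refine (Finset.abs_sum_le_sum_abs _ _).trans ?_
    exact (Finset.sum_le_sum fun i _ => hbound i).trans hCS
  rw [← Real.sqrt_eq_rpow]
  exact hfinal
end
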